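/- The only palindromic factors occurring in the run-length sequence of any infinite paperfolding sequence are 1, 2, 3, 22, 212, 232, 12321, and 32123. -/

import Mathlib

/-- Paperfolding word; instructions are given with the most recent (last) instruction first. -/
def foldAux : List ℤ → List ℤ
  | [] => []
  | a :: f => foldAux f ++ a :: (foldAux f).reverse.map (fun x => -x)

/-- `paper f` is the finite paperfolding word `P_f` for instructions `f = [f_0, f_1, …]`,
satisfying `P_ε = ε` and `P_{f·a} = P_f · a · (-P_f^R)`. -/
def paper (f : List ℤ) : List ℤ := foldAux f.reverse

/-- The sequence of lengths of the maximal runs (maximal blocks of equal symbols) of `w`. -/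
def runLengths (w : List ℤ) : List ℕ := (w.splitBy (fun a b => a == b)).map List.length

/-- `p` (indexed from 1) is the infinite paperfolding sequence with instructions `f`,
i.e. every finite paperfolding word of a prefix of `f` is a prefix of `p`. -/
def IsLimit (f : ℕ → ℤ) (p : ℕ → ℤ) : Prop :=
  ∀ m k, k < (paper ((List.range m).map f)).length →
    p (k + 1) = (paper ((List.range m).map f)).getD k 0

/-- `E` enumerates, in increasing order (`E 1 < E 2 < ⋯`, with the convention `E 0 = 0`),
the ending positions of the maximal runs of the sequence `p` (indexed from 1):
position `m ≥ 1` ends a run iff `p m ≠ p (m+1)`. -/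
def IsRunEnds (p : ℕ → ℤ) (E : ℕ → ℕ) : Prop :=
  E 0 = 0 ∧ StrictMono E ∧ ∀ m, 1 ≤ m → ((∃ n, 1 ≤ n ∧ E n = m) ↔ p m ≠ p (m + 1))



lemma getD_map_neg (l : List ℤ) (n : ℕ) : (l.map (fun x => -x)).getD n 0 = -(l.getD n 0) := by
  simp only [List.getD_eq_getElem?_getD, List.getElem?_map]
  cases l[n]? <;> simp

lemma getD_reverse (l : List ℤ) (n : ℕ) (h : n < l.length) :
    (l.reverse).getD n 0 = l.getD (l.length - 1 - n) 0 := by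
  rw [l.reverse.getD_eq_getElem 0 (by simpa using h), l.getD_eq_getElem 0 (by omega),
    List.getElem_reverse]

lemma foldAux_length (l : List ℤ) : (foldAux l).length = 2 ^ l.length - 1 := by
  induction l with
  | nil => simp [foldAux]
  | cons a l ih =>
    have : 1 ≤ 2 ^ l.length := Nat.one_le_two_pow
    simp [foldAux, ih, pow_succ]
    omega

lemma getD_pf_mid (W : List ℤ) (a : ℤ) :
    (W ++ a :: (W.reverse.map (fun x => -x))).getD W.length 0 = a := by
  rw [List.getD_append_right _ _ _ _ le_rfl, Nat.sub_self, List.getD_cons_zero]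

lemma getD_pf_right (W : List ℤ) (a : ℤ) (k : ℕ) (h1 : W.length < k) (h2 : k ≤ 2*W.length) :
    (W ++ a :: (W.reverse.map (fun x => -x))).getD k 0 = -(W.getD (2*W.length - k) 0) := by
  rw [List.getD_append_right _ _ _ _ (by omega), show k - W.length = (k - W.length - 1)+1 by omega,
    List.getD_cons_succ, getD_map_neg, getD_reverse _ _ (by omega)]
  congr 2
  omega

lemma getD_pf_high (W : List ℤ) (a : ℤ) (k : ℕ) (h : 2*W.length < k) :
    (W ++ a :: (W.reverse.map (fun x => -x))).getD k 0 = 0 := by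
  apply List.getD_eq_default
  simp only [List.length_append, List.length_cons, List.length_map, List.length_reverse]
  omega

lemma foldAux_even (l : List ℤ) (b : ℤ) (j : ℕ) (hj : 2*j < (foldAux (l ++ [b])).length) :
    (foldAux (l ++ [b])).getD (2*j) 0 = (-1)^j * b := by
  induction l generalizing j with
  | nil =>
    have hj0 : j = 0 := by simp [foldAux] at hj; omega
    subst hj0
    simp [foldAux]
  | cons a l ih =>
    have h1 : 1 ≤ 2 ^ (l.length + 1) := Nat.one_le_two_pow
    have hlen : (foldAux (l ++ [b])).length = 2 ^ (l.length + 1) - 1 := by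
      simp [foldAux_length]
    have hLodd : (foldAux (l ++ [b])).length % 2 = 1 := by
      have : 2 ∣ 2 ^ (l.length + 1) := dvd_pow_self 2 (Nat.succ_ne_zero _)
      omega
    have hbig : (foldAux ((a :: l) ++ [b]))
        = foldAux (l ++ [b]) ++ a :: ((foldAux (l ++ [b])).reverse.map (fun x => -x)) := rfl
    rw [hbig] at hj ⊢
    simp only [List.length_append, List.length_cons, List.length_map, List.length_reverse] at hj
    rcases lt_trichotomy (2*j) (foldAux (l ++ [b])).length with h | h | h
    · rw [List.getD_append _ _ _ _ (by omega)]
      exact ih j (by omega)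
    · omega
    · rw [getD_pf_right _ _ _ (by omega) (by omega)]
      rw [show 2*(foldAux (l ++ [b])).length - 2*j = 2*((foldAux (l ++ [b])).length - j) by omega]
      rw [ih ((foldAux (l ++ [b])).length - j) (by omega)]
      rcases Nat.even_or_odd j with hj2 | hj2
      · have h2 := Nat.even_iff.mp hj2
        rw [(Nat.odd_iff.mpr (show ((foldAux (l ++ [b])).length - j) % 2 = 1 by omega)).neg_one_pow,
          hj2.neg_one_pow]
        ring
      · have h2 := Nat.odd_iff.mp hj2
        rw [(Nat.even_iff.mpr (show ((foldAux (l ++ [b])).length - j) % 2 = 0 by omega)).neg_one_pow,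
          hj2.neg_one_pow]
        ring

lemma foldAux_odd (l : List ℤ) (j : ℕ) :
    (foldAux l).getD (2*j+1) 0 = (foldAux l.dropLast).getD j 0 := by
  induction l generalizing j with
  | nil => simp [foldAux]
  | cons a l ih =>
    rcases eq_or_ne l [] with rfl | hne
    · simp [foldAux]
    · obtain ⟨l', b, rfl⟩ : ∃ l' b, l = l' ++ [b] :=
        ⟨l.dropLast, l.getLast hne, (List.dropLast_append_getLast hne).symm⟩
      have h1 : 1 ≤ 2 ^ (l'.length + 1) := Nat.one_le_two_pow
      have h1' : 1 ≤ 2 ^ l'.length := Nat.one_le_two_pow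
      have hlen : (foldAux (l' ++ [b])).length = 2 ^ (l'.length + 1) - 1 := by
        simp [foldAux_length]
      have hlen' : (foldAux (l' ++ [b]).dropLast).length = 2 ^ l'.length - 1 := by
        simp [foldAux_length]
      have hLL' : (foldAux (l' ++ [b])).length = 2 * (foldAux (l' ++ [b]).dropLast).length + 1 := by
        rw [hlen, hlen', pow_succ]; omega
      have hbig : (foldAux (a :: (l' ++ [b])))
          = foldAux (l' ++ [b]) ++ a :: ((foldAux (l' ++ [b])).reverse.map (fun x => -x)) := rfl
      have hdrop : (a :: (l' ++ [b])).dropLast = a :: (l' ++ [b]).dropLast := by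
        rw [show a :: (l' ++ [b]) = (a :: l') ++ [b] by simp, List.dropLast_concat,
          List.dropLast_concat]
      have hbig' : (foldAux ((a :: (l' ++ [b])).dropLast))
          = foldAux (l' ++ [b]).dropLast ++ a :: ((foldAux (l' ++ [b]).dropLast).reverse.map (fun x => -x)) := by
        rw [hdrop]; rfl
      rw [hbig, hbig']
      rcases lt_trichotomy (2*j+1) (foldAux (l' ++ [b])).length with h | h | h
      · rw [List.getD_append _ _ _ _ (by omega), List.getD_append _ _ _ _ (by omega)]
        exact ih j
      · rw [show 2*j+1 = (foldAux (l' ++ [b])).length from h,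
          show j = (foldAux (l' ++ [b]).dropLast).length by omega,
          getD_pf_mid, getD_pf_mid]
      · rcases le_or_gt (2*j+1) (2*(foldAux (l' ++ [b])).length) with h2 | h2
        · rw [getD_pf_right _ _ _ (by omega) (by omega),
            getD_pf_right _ _ _ (by omega) (by omega)]
          rw [show 2*(foldAux (l' ++ [b])).length - (2*j+1)
              = 2*((foldAux (l' ++ [b]).dropLast).length - (j - (foldAux (l' ++ [b]).dropLast).length)) + 1 by omega]
          rw [ih]
          congr 2
          omega
        · rw [getD_pf_high _ _ _ (by omega), getD_pf_high _ _ _ (by omega)]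

lemma paper_length (fs : List ℤ) : (paper fs).length = 2 ^ fs.length - 1 := by
  simp [paper, foldAux_length]

lemma paper_getD_even (b : ℤ) (fs : List ℤ) (j : ℕ) (hj : 2*j < (paper (b :: fs)).length) :
    (paper (b :: fs)).getD (2*j) 0 = (-1)^j * b := by
  have h : (b :: fs).reverse = fs.reverse ++ [b] := by simp
  rw [paper, h] at hj ⊢
  exact foldAux_even _ _ _ hj

lemma paper_getD_odd (fs : List ℤ) (j : ℕ) :
    (paper fs).getD (2*j+1) 0 = (paper fs.tail).getD j 0 := by
  rw [paper, paper, foldAux_odd]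
  congr 2
  cases fs with
  | nil => rfl
  | cons b t => simp [List.reverse_cons, List.dropLast_concat]

lemma range_map_succ_eq (f : ℕ → ℤ) (m : ℕ) :
    (List.range (m+1)).map f = f 0 :: ((List.range m).map (fun k => f (k+1))) := by
  rw [List.range_succ_eq_map, List.map_cons, List.map_map]
  rfl

lemma IsLimit.odd {f p : ℕ → ℤ} (hp : IsLimit f p) (j : ℕ) :
    p (2*j+1) = (-1)^j * f 0 := by
  have hm : 2*j < (paper ((List.range (2*j+1)).map f)).length := by
    rw [paper_length]
    have := Nat.lt_two_pow_self (n := 2*j+1)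
    simp only [List.length_map, List.length_range]
    omega
  have h1 := hp (2*j+1) (2*j) hm
  rw [h1, range_map_succ_eq] at *
  exact paper_getD_even _ _ _ hm

lemma IsLimit.shift {f p : ℕ → ℤ} (hp : IsLimit f p) :
    IsLimit (fun k => f (k+1)) (fun n => p (2*n)) := by
  intro m k hk
  simp only
  have h2 : 1 ≤ 2^m := Nat.one_le_two_pow
  have hk' : 2*k+1 < (paper ((List.range (m+1)).map f)).length := by
    rw [paper_length]
    rw [paper_length] at hk
    simp only [List.length_map, List.length_range] at hk ⊢
    rw [pow_succ]
    omega
  have h1 := hp (m+1) (2*k+1) hk'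
  rw [show 2*(k+1) = 2*k+1+1 by ring, h1, paper_getD_odd]
  congr 2
  rw [range_map_succ_eq, List.tail_cons]

lemma IsLimit.pm : ∀ n (f p : ℕ → ℤ), (∀ k, f k = -1 ∨ f k = 1) → IsLimit f p → 1 ≤ n →
    p n = 1 ∨ p n = -1 := by
  intro n
  induction n using Nat.strong_induction_on with
  | _ n IH =>
    intro f p hf hp hn
    rcases Nat.even_or_odd n with he | ho
    · have he' := Nat.even_iff.mp he
      obtain ⟨k, rfl⟩ : ∃ k, n = 2*k := ⟨n/2, by omega⟩
      have := IH k (by omega) (fun j => f (j+1)) (fun m => p (2*m)) (fun j => hf (j+1))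
        hp.shift (by omega)
      simpa using this
    · obtain ⟨k, rfl⟩ := ho
      rw [hp.odd k]
      rcases hf 0 with h | h <;> rcases Nat.even_or_odd k with h2 | h2 <;>
        simp [h, h2.neg_one_pow]

/-- `cfun p k = 1` iff position `2k` belongs to the run of position `2k+1`. -/
def cfun (p : ℕ → ℤ) : ℕ → ℕ := fun k => if k = 0 then 0 else if p (2*k) = p (2*k+1) then 1 else 0

lemma cfun_le (p : ℕ → ℤ) (k : ℕ) : cfun p k ≤ 1 := by
  unfold cfun
  split
  · omega
  · split <;> omega

lemma cfun_eq_one {p : ℕ → ℤ} {k : ℕ} (hk : k ≠ 0) :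
    cfun p k = 1 ↔ p (2*k) = p (2*k+1) := by
  unfold cfun
  rw [if_neg hk]
  split <;> simp_all

section main
variable {f p : ℕ → ℤ} (hf : ∀ n, f n = -1 ∨ f n = 1) (hp : IsLimit f p)
include hf hp

lemma cfun_O0 (j : ℕ) : cfun p (2*j+1) + cfun p (2*j+3) = 1 := by
  have e1 : p (2*(2*j+1)) = (-1)^j * f 1 := by
    have h := hp.shift.odd j
    simpa using h
  have e2 : p (2*(2*j+1)+1) = (-1)^(2*j+1) * f 0 := hp.odd (2*j+1)
  have e3 : p (2*(2*j+3)) = (-1)^(j+1) * f 1 := by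
    have h := hp.shift.odd (j+1)
    rw [show 2*(2*(j+1)+1) = 2*(2*j+3) by ring] at h
    simpa using h
  have e4 : p (2*(2*j+3)+1) = (-1)^(2*j+3) * f 0 := by
    have h := hp.odd (2*j+3)
    rw [show 2*(2*j+3)+1 = 2*(2*j+3)+1 by ring] at h
    exact h
  simp only [cfun, if_neg (show ¬(2*j+1 = 0) by omega), if_neg (show ¬(2*j+3 = 0) by omega),
    e1, e2, e3, e4]
  rw [show ((-1:ℤ))^(2*j+1) = -1 from Odd.neg_one_pow ⟨j, by ring⟩,
    show ((-1:ℤ))^(2*j+3) = -1 from Odd.neg_one_pow ⟨j+1, by ring⟩, pow_succ]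
  rcases neg_one_pow_eq_or ℤ j with hx | hx <;> rcases hf 0 with h0 | h0 <;>
    rcases hf 1 with h1 | h1 <;> rw [hx, h0, h1] <;> norm_num

lemma cfun_O1 (j : ℕ) : cfun p (4*j+2) + cfun p (4*j+6) = 1 := by
  have e1 : p (2*(4*j+2)) = (-1)^j * f 2 := by
    have h := hp.shift.shift.odd j
    rw [show 2*(2*(2*j+1)) = 2*(4*j+2) by ring] at h
    simpa using h
  have e2 : p (2*(4*j+2)+1) = (-1)^(4*j+2) * f 0 := hp.odd (4*j+2)
  have e3 : p (2*(4*j+6)) = (-1)^(j+1) * f 2 := by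
    have h := hp.shift.shift.odd (j+1)
    rw [show 2*(2*(2*(j+1)+1)) = 2*(4*j+6) by ring] at h
    simpa using h
  have e4 : p (2*(4*j+6)+1) = (-1)^(4*j+6) * f 0 := hp.odd (4*j+6)
  simp only [cfun, if_neg (show ¬(4*j+2 = 0) by omega), if_neg (show ¬(4*j+6 = 0) by omega),
    e1, e2, e3, e4]
  rw [show ((-1:ℤ))^(4*j+2) = 1 from Even.neg_one_pow ⟨2*j+1, by ring⟩,
    show ((-1:ℤ))^(4*j+6) = 1 from Even.neg_one_pow ⟨2*j+3, by ring⟩, pow_succ]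
  rcases neg_one_pow_eq_or ℤ j with hx | hx <;> rcases hf 0 with h0 | h0 <;>
    rcases hf 2 with h1 | h1 <;> rw [hx, h0, h1] <;> norm_num

lemma boundary_iff (m : ℕ) (hm : 1 ≤ m) :
    (∃ k, 1 ≤ k ∧ 2*k - cfun p k = m) ↔ p m ≠ p (m + 1) := by
  rcases Nat.even_or_odd m with he | ho
  · have he' := Nat.even_iff.mp he
    obtain ⟨u, rfl⟩ : ∃ u, m = 2*u := ⟨m/2, by omega⟩
    constructor
    · rintro ⟨k, hk1, hk2⟩
      have hck := cfun_le p k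
      have hc0 : cfun p k = 0 := by omega
      have hku : k = u := by omega
      subst hku
      have : ¬ (p (2*k) = p (2*k+1)) := by
        intro hcon
        rw [(cfun_eq_one (by omega)).mpr hcon] at hc0
        omega
      rw [show 2*k+1 = 2*k + 1 by rfl] at this
      exact this
    · intro hne
      refine ⟨u, by omega, ?_⟩
      have : cfun p u = 0 := by
        have := cfun_le p u
        rcases Nat.eq_or_lt_of_le this with h | h
        · exfalso
          exact hne ((cfun_eq_one (by omega)).mp h)
        · omega
      omega
  · obtain ⟨u, rfl⟩ := ho
    have ha : p (2*u+1) = (-1)^u * f 0 := hp.odd u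
    have hb : p (2*(u+1)+1) = (-1)^(u+1) * f 0 := hp.odd (u+1)
    have hc : p (2*(u+1)) = 1 ∨ p (2*(u+1)) = -1 := IsLimit.pm (2*(u+1)) f p hf hp (by omega)
    have key : (p (2*u+1) ≠ p (2*u+1+1)) ↔ cfun p (u+1) = 1 := by
      rw [cfun_eq_one (by omega : u+1 ≠ 0)]
      rw [show 2*u+1+1 = 2*(u+1) by ring, ha, hb, pow_succ]
      rcases neg_one_pow_eq_or ℤ u with hx | hx <;> rcases hf 0 with h0 | h0 <;>
        rcases hc with h2 | h2 <;> rw [hx, h0, h2] <;> norm_num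
    constructor
    · rintro ⟨k, hk1, hk2⟩
      have hck := cfun_le p k
      obtain ⟨hc1, rfl⟩ : cfun p k = 1 ∧ k = u+1 := by omega
      exact key.mpr hc1
    · intro h1
      exact ⟨u+1, by omega, by have := key.mp h1; omega⟩

lemma E_eq {E : ℕ → ℕ} (hE : IsRunEnds p E) : ∀ n, E n = 2*n - cfun p n := by
  obtain ⟨hE0, hEm, hEiff⟩ := hE
  have hb0 : 2*0 - cfun p 0 = 0 := by omega
  have hbmono : StrictMono (fun n => 2*n - cfun p n) := by
    apply strictMono_nat_of_lt_succ
    intro n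
    have h1 := cfun_le p n
    have h2 := cfun_le p (n+1)
    show 2*n - cfun p n < 2*(n+1) - cfun p (n+1)
    omega
  intro n
  induction n using Nat.strong_induction_on with
  | _ n IH =>
    rcases Nat.eq_zero_or_pos n with rfl | hn
    · rw [hE0]; omega
    · have hEn1 : 1 ≤ E n := by
        have : E 0 < E n := hEm hn
        omega
    -- E n is a boundary, hence equals some b j with j ≥ 1
      obtain ⟨j, hj1, hj2⟩ : ∃ j, 1 ≤ j ∧ 2*j - cfun p j = E n :=
        (boundary_iff hf hp (E n) hEn1).mpr ((hEiff (E n) hEn1).mp ⟨n, hn, rfl⟩)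
    -- b n is a boundary, hence equals some E i with i ≥ 1
      have hbn1 : 1 ≤ 2*n - cfun p n := by
        have := cfun_le p n
        omega
      obtain ⟨i, hi1, hi2⟩ : ∃ i, 1 ≤ i ∧ E i = 2*n - cfun p n :=
        (hEiff (2*n - cfun p n) hbn1).mpr
          ((boundary_iff hf hp (2*n - cfun p n) hbn1).mp ⟨n, hn, rfl⟩)
      have h1 : E n ≤ 2*n - cfun p n := by
        rcases lt_or_ge i n with h | h
        · exfalso
          have hii := IH i h
          have : (2:ℕ)*i - cfun p i = 2*n - cfun p n := by omega
          have := hbmono.injective this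
          omega
        · have hge : E n ≤ E i := by
            rcases Nat.eq_or_lt_of_le h with rfl | h'
            · omega
            · exact le_of_lt (hEm h')
          omega
      have h2 : 2*n - cfun p n ≤ E n := by
        rcases lt_or_ge j n with h | h
        · exfalso
          have := IH j h
          have : E n = E j := by omega
          have := hEm.injective this
          omega
        · have hge : 2*n - cfun p n ≤ 2*j - cfun p j := by
            rcases Nat.eq_or_lt_of_le h with rfl | h'
            · omega
            · exact le_of_lt (hbmono h')
          omega
      omega

end main

lemma case2 (c R : ℕ → ℕ)
    (hc : ∀ k, c k ≤ 1)
    (hO0 : ∀ j, c (2*j+1) + c (2*j+3) = 1)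
    (hO1 : ∀ j, c (4*j+2) + c (4*j+6) = 1)
    (hRc : ∀ k, 1 ≤ k → R k + c k = 2 + c (k-1))
    (i : ℕ) (hi1 : 1 ≤ i)
    (pal : ∀ t < 2, R (i + t) = R (i + (2 - 1) - t)) :
    R i = 2 ∧ R (i + 1) = 2 := by
  obtain ⟨m, r, hr4, hieq⟩ : ∃ m r, r < 4 ∧ i = 4*m + r + 1 :=
    ⟨(i-1)/4, (i-1)%4, Nat.mod_lt _ (by norm_num), by omega⟩
  have hr' : r = 0 ∨ r = 1 ∨ r = 2 ∨ r = 3 := by omega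
  clear hr4
  rcases hr' with rfl | rfl | rfl | rfl
  · -- r = 0
    have b0 := hc (i - 1)
    have b1 := hc (i)
    have b2 := hc (i + 1)
    have g0 := hRc i (by omega)
    have g1 := hRc (i + 1) (by omega)
    rw [show i + 1 - 1 = i by omega] at g1
    have q0 := pal 0 (by omega)
    rw [show i + 0 = i by omega] at q0
    rw [show i + (2 - 1) - 0 = i + 1 by omega] at q0
    omega
  · -- r = 1
    have b0 := hc (i - 1)
    have b1 := hc (i)
    have b2 := hc (i + 1)
    have g0 := hRc i (by omega)
    have g1 := hRc (i + 1) (by omega)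
    rw [show i + 1 - 1 = i by omega] at g1
    have q0 := pal 0 (by omega)
    rw [show i + 0 = i by omega] at q0
    rw [show i + (2 - 1) - 0 = i + 1 by omega] at q0
    have o0 : c (i - 1) + c (i + 1) = 1 := by
      have h := hO0 (2*m)
      rw [show 2*(2*m)+1 = i - 1 by omega, show 2*(2*m)+3 = i + 1 by omega] at h
      exact h
    omega
  · -- r = 2
    have b0 := hc (i - 1)
    have b1 := hc (i)
    have b2 := hc (i + 1)
    have g0 := hRc i (by omega)
    have g1 := hRc (i + 1) (by omega)
    rw [show i + 1 - 1 = i by omega] at g1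
    have q0 := pal 0 (by omega)
    rw [show i + 0 = i by omega] at q0
    rw [show i + (2 - 1) - 0 = i + 1 by omega] at q0
    omega
  · -- r = 3
    have b0 := hc (i - 1)
    have b1 := hc (i)
    have b2 := hc (i + 1)
    have g0 := hRc i (by omega)
    have g1 := hRc (i + 1) (by omega)
    rw [show i + 1 - 1 = i by omega] at g1
    have q0 := pal 0 (by omega)
    rw [show i + 0 = i by omega] at q0
    rw [show i + (2 - 1) - 0 = i + 1 by omega] at q0
    have o0 : c (i - 1) + c (i + 1) = 1 := by
      have h := hO0 (2*m + 1)
      rw [show 2*(2*m + 1)+1 = i - 1 by omega, show 2*(2*m + 1)+3 = i + 1 by omega] at h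
      exact h
    omega

lemma case3 (c R : ℕ → ℕ)
    (hc : ∀ k, c k ≤ 1)
    (hO0 : ∀ j, c (2*j+1) + c (2*j+3) = 1)
    (hO1 : ∀ j, c (4*j+2) + c (4*j+6) = 1)
    (hRc : ∀ k, 1 ≤ k → R k + c k = 2 + c (k-1))
    (i : ℕ) (hi1 : 1 ≤ i)
    (pal : ∀ t < 3, R (i + t) = R (i + (3 - 1) - t)) :
    (R i = 2 ∧ R (i + 1) = 1 ∧ R (i + 2) = 2) ∨ (R i = 2 ∧ R (i + 1) = 3 ∧ R (i + 2) = 2) := by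
  obtain ⟨m, r, hr4, hieq⟩ : ∃ m r, r < 4 ∧ i = 4*m + r + 1 :=
    ⟨(i-1)/4, (i-1)%4, Nat.mod_lt _ (by norm_num), by omega⟩
  have hr' : r = 0 ∨ r = 1 ∨ r = 2 ∨ r = 3 := by omega
  clear hr4
  rcases hr' with rfl | rfl | rfl | rfl
  · -- r = 0
    have b0 := hc (i - 1)
    have b1 := hc (i)
    have b2 := hc (i + 1)
    have b3 := hc (i + 2)
    have g0 := hRc i (by omega)
    have g1 := hRc (i + 1) (by omega)
    rw [show i + 1 - 1 = i by omega] at g1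
    have g2 := hRc (i + 2) (by omega)
    rw [show i + 2 - 1 = i + 1 by omega] at g2
    have q0 := pal 0 (by omega)
    rw [show i + 0 = i by omega] at q0
    rw [show i + (3 - 1) - 0 = i + 2 by omega] at q0
    have o0 : c (i) + c (i + 2) = 1 := by
      have h := hO0 (2*m)
      rw [show 2*(2*m)+1 = i by omega, show 2*(2*m)+3 = i + 2 by omega] at h
      exact h
    omega
  · -- r = 1
    have b0 := hc (i - 1)
    have b1 := hc (i)
    have b2 := hc (i + 1)
    have b3 := hc (i + 2)
    have g0 := hRc i (by omega)
    have g1 := hRc (i + 1) (by omega)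
    rw [show i + 1 - 1 = i by omega] at g1
    have g2 := hRc (i + 2) (by omega)
    rw [show i + 2 - 1 = i + 1 by omega] at g2
    have q0 := pal 0 (by omega)
    rw [show i + 0 = i by omega] at q0
    rw [show i + (3 - 1) - 0 = i + 2 by omega] at q0
    have o0 : c (i - 1) + c (i + 1) = 1 := by
      have h := hO0 (2*m)
      rw [show 2*(2*m)+1 = i - 1 by omega, show 2*(2*m)+3 = i + 1 by omega] at h
      exact h
    omega
  · -- r = 2
    have b0 := hc (i - 1)
    have b1 := hc (i)
    have b2 := hc (i + 1)
    have b3 := hc (i + 2)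
    have g0 := hRc i (by omega)
    have g1 := hRc (i + 1) (by omega)
    rw [show i + 1 - 1 = i by omega] at g1
    have g2 := hRc (i + 2) (by omega)
    rw [show i + 2 - 1 = i + 1 by omega] at g2
    have q0 := pal 0 (by omega)
    rw [show i + 0 = i by omega] at q0
    rw [show i + (3 - 1) - 0 = i + 2 by omega] at q0
    have o0 : c (i) + c (i + 2) = 1 := by
      have h := hO0 (2*m + 1)
      rw [show 2*(2*m + 1)+1 = i by omega, show 2*(2*m + 1)+3 = i + 2 by omega] at h
      exact h
    omega
  · -- r = 3
    have b0 := hc (i - 1)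
    have b1 := hc (i)
    have b2 := hc (i + 1)
    have b3 := hc (i + 2)
    have g0 := hRc i (by omega)
    have g1 := hRc (i + 1) (by omega)
    rw [show i + 1 - 1 = i by omega] at g1
    have g2 := hRc (i + 2) (by omega)
    rw [show i + 2 - 1 = i + 1 by omega] at g2
    have q0 := pal 0 (by omega)
    rw [show i + 0 = i by omega] at q0
    rw [show i + (3 - 1) - 0 = i + 2 by omega] at q0
    have o0 : c (i - 1) + c (i + 1) = 1 := by
      have h := hO0 (2*m + 1)
      rw [show 2*(2*m + 1)+1 = i - 1 by omega, show 2*(2*m + 1)+3 = i + 1 by omega] at h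
      exact h
    omega

lemma case4 (c R : ℕ → ℕ)
    (hc : ∀ k, c k ≤ 1)
    (hO0 : ∀ j, c (2*j+1) + c (2*j+3) = 1)
    (hO1 : ∀ j, c (4*j+2) + c (4*j+6) = 1)
    (hRc : ∀ k, 1 ≤ k → R k + c k = 2 + c (k-1))
    (i : ℕ) (hi1 : 1 ≤ i)
    (pal : ∀ t < 4, R (i + t) = R (i + (4 - 1) - t)) :
    False := by
  obtain ⟨m, r, hr4, hieq⟩ : ∃ m r, r < 4 ∧ i = 4*m + r + 1 :=
    ⟨(i-1)/4, (i-1)%4, Nat.mod_lt _ (by norm_num), by omega⟩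
  have hr' : r = 0 ∨ r = 1 ∨ r = 2 ∨ r = 3 := by omega
  clear hr4
  rcases hr' with rfl | rfl | rfl | rfl
  · -- r = 0
    have b0 := hc (i - 1)
    have b1 := hc (i)
    have b2 := hc (i + 1)
    have b3 := hc (i + 2)
    have b4 := hc (i + 3)
    have g0 := hRc i (by omega)
    have g1 := hRc (i + 1) (by omega)
    rw [show i + 1 - 1 = i by omega] at g1
    have g2 := hRc (i + 2) (by omega)
    rw [show i + 2 - 1 = i + 1 by omega] at g2
    have g3 := hRc (i + 3) (by omega)
    rw [show i + 3 - 1 = i + 2 by omega] at g3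
    have q0 := pal 0 (by omega)
    rw [show i + 0 = i by omega] at q0
    rw [show i + (4 - 1) - 0 = i + 3 by omega] at q0
    have q1 := pal 1 (by omega)
    rw [show i + (4 - 1) - 1 = i + 2 by omega] at q1
    have o0 : c (i) + c (i + 2) = 1 := by
      have h := hO0 (2*m)
      rw [show 2*(2*m)+1 = i by omega, show 2*(2*m)+3 = i + 2 by omega] at h
      exact h
    omega
  · -- r = 1
    have b0 := hc (i - 1)
    have b1 := hc (i)
    have b2 := hc (i + 1)
    have b3 := hc (i + 2)
    have b4 := hc (i + 3)
    have g0 := hRc i (by omega)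
    have g1 := hRc (i + 1) (by omega)
    rw [show i + 1 - 1 = i by omega] at g1
    have g2 := hRc (i + 2) (by omega)
    rw [show i + 2 - 1 = i + 1 by omega] at g2
    have g3 := hRc (i + 3) (by omega)
    rw [show i + 3 - 1 = i + 2 by omega] at g3
    have q0 := pal 0 (by omega)
    rw [show i + 0 = i by omega] at q0
    rw [show i + (4 - 1) - 0 = i + 3 by omega] at q0
    have q1 := pal 1 (by omega)
    rw [show i + (4 - 1) - 1 = i + 2 by omega] at q1
    have o0 : c (i - 1) + c (i + 1) = 1 := by
      have h := hO0 (2*m)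
      rw [show 2*(2*m)+1 = i - 1 by omega, show 2*(2*m)+3 = i + 1 by omega] at h
      exact h
    have o1 : c (i + 1) + c (i + 3) = 1 := by
      have h := hO0 (2*m + 1)
      rw [show 2*(2*m + 1)+1 = i + 1 by omega, show 2*(2*m + 1)+3 = i + 3 by omega] at h
      exact h
    omega
  · -- r = 2
    have b0 := hc (i - 1)
    have b1 := hc (i)
    have b2 := hc (i + 1)
    have b3 := hc (i + 2)
    have b4 := hc (i + 3)
    have g0 := hRc i (by omega)
    have g1 := hRc (i + 1) (by omega)
    rw [show i + 1 - 1 = i by omega] at g1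
    have g2 := hRc (i + 2) (by omega)
    rw [show i + 2 - 1 = i + 1 by omega] at g2
    have g3 := hRc (i + 3) (by omega)
    rw [show i + 3 - 1 = i + 2 by omega] at g3
    have q0 := pal 0 (by omega)
    rw [show i + 0 = i by omega] at q0
    rw [show i + (4 - 1) - 0 = i + 3 by omega] at q0
    have q1 := pal 1 (by omega)
    rw [show i + (4 - 1) - 1 = i + 2 by omega] at q1
    have p0 : c (i - 1) + c (i + 3) = 1 := by
      have h := hO1 (m)
      rw [show 4*(m)+2 = i - 1 by omega, show 4*(m)+6 = i + 3 by omega] at h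
      exact h
    have o1 : c (i) + c (i + 2) = 1 := by
      have h := hO0 (2*m + 1)
      rw [show 2*(2*m + 1)+1 = i by omega, show 2*(2*m + 1)+3 = i + 2 by omega] at h
      exact h
    omega
  · -- r = 3
    have b0 := hc (i - 1)
    have b1 := hc (i)
    have b2 := hc (i + 1)
    have b3 := hc (i + 2)
    have b4 := hc (i + 3)
    have g0 := hRc i (by omega)
    have g1 := hRc (i + 1) (by omega)
    rw [show i + 1 - 1 = i by omega] at g1
    have g2 := hRc (i + 2) (by omega)
    rw [show i + 2 - 1 = i + 1 by omega] at g2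
    have g3 := hRc (i + 3) (by omega)
    rw [show i + 3 - 1 = i + 2 by omega] at g3
    have q0 := pal 0 (by omega)
    rw [show i + 0 = i by omega] at q0
    rw [show i + (4 - 1) - 0 = i + 3 by omega] at q0
    have q1 := pal 1 (by omega)
    rw [show i + (4 - 1) - 1 = i + 2 by omega] at q1
    have o0 : c (i - 1) + c (i + 1) = 1 := by
      have h := hO0 (2*m + 1)
      rw [show 2*(2*m + 1)+1 = i - 1 by omega, show 2*(2*m + 1)+3 = i + 1 by omega] at h
      exact h
    have o1 : c (i + 1) + c (i + 3) = 1 := by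
      have h := hO0 (2*m + 2)
      rw [show 2*(2*m + 2)+1 = i + 1 by omega, show 2*(2*m + 2)+3 = i + 3 by omega] at h
      exact h
    omega

lemma case5 (c R : ℕ → ℕ)
    (hc : ∀ k, c k ≤ 1)
    (hO0 : ∀ j, c (2*j+1) + c (2*j+3) = 1)
    (hO1 : ∀ j, c (4*j+2) + c (4*j+6) = 1)
    (hRc : ∀ k, 1 ≤ k → R k + c k = 2 + c (k-1))
    (i : ℕ) (hi1 : 1 ≤ i)
    (pal : ∀ t < 5, R (i + t) = R (i + (5 - 1) - t)) :
    (R i = 1 ∧ R (i + 1) = 2 ∧ R (i + 2) = 3 ∧ R (i + 3) = 2 ∧ R (i + 4) = 1) ∨ (R i = 3 ∧ R (i + 1) = 2 ∧ R (i + 2) = 1 ∧ R (i + 3) = 2 ∧ R (i + 4) = 3) := by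
  obtain ⟨m, r, hr4, hieq⟩ : ∃ m r, r < 4 ∧ i = 4*m + r + 1 :=
    ⟨(i-1)/4, (i-1)%4, Nat.mod_lt _ (by norm_num), by omega⟩
  have hr' : r = 0 ∨ r = 1 ∨ r = 2 ∨ r = 3 := by omega
  clear hr4
  rcases hr' with rfl | rfl | rfl | rfl
  · -- r = 0
    have b0 := hc (i - 1)
    have b1 := hc (i)
    have b2 := hc (i + 1)
    have b3 := hc (i + 2)
    have b4 := hc (i + 3)
    have b5 := hc (i + 4)
    have g0 := hRc i (by omega)
    have g1 := hRc (i + 1) (by omega)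
    rw [show i + 1 - 1 = i by omega] at g1
    have g2 := hRc (i + 2) (by omega)
    rw [show i + 2 - 1 = i + 1 by omega] at g2
    have g3 := hRc (i + 3) (by omega)
    rw [show i + 3 - 1 = i + 2 by omega] at g3
    have g4 := hRc (i + 4) (by omega)
    rw [show i + 4 - 1 = i + 3 by omega] at g4
    have q0 := pal 0 (by omega)
    rw [show i + 0 = i by omega] at q0
    rw [show i + (5 - 1) - 0 = i + 4 by omega] at q0
    have q1 := pal 1 (by omega)
    rw [show i + (5 - 1) - 1 = i + 3 by omega] at q1
    have o0 : c (i) + c (i + 2) = 1 := by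
      have h := hO0 (2*m)
      rw [show 2*(2*m)+1 = i by omega, show 2*(2*m)+3 = i + 2 by omega] at h
      exact h
    have o1 : c (i + 2) + c (i + 4) = 1 := by
      have h := hO0 (2*m + 1)
      rw [show 2*(2*m + 1)+1 = i + 2 by omega, show 2*(2*m + 1)+3 = i + 4 by omega] at h
      exact h
    omega
  · -- r = 1
    have b0 := hc (i - 1)
    have b1 := hc (i)
    have b2 := hc (i + 1)
    have b3 := hc (i + 2)
    have b4 := hc (i + 3)
    have b5 := hc (i + 4)
    have g0 := hRc i (by omega)
    have g1 := hRc (i + 1) (by omega)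
    rw [show i + 1 - 1 = i by omega] at g1
    have g2 := hRc (i + 2) (by omega)
    rw [show i + 2 - 1 = i + 1 by omega] at g2
    have g3 := hRc (i + 3) (by omega)
    rw [show i + 3 - 1 = i + 2 by omega] at g3
    have g4 := hRc (i + 4) (by omega)
    rw [show i + 4 - 1 = i + 3 by omega] at g4
    have q0 := pal 0 (by omega)
    rw [show i + 0 = i by omega] at q0
    rw [show i + (5 - 1) - 0 = i + 4 by omega] at q0
    have q1 := pal 1 (by omega)
    rw [show i + (5 - 1) - 1 = i + 3 by omega] at q1
    have o0 : c (i - 1) + c (i + 1) = 1 := by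
      have h := hO0 (2*m)
      rw [show 2*(2*m)+1 = i - 1 by omega, show 2*(2*m)+3 = i + 1 by omega] at h
      exact h
    have p1 : c (i) + c (i + 4) = 1 := by
      have h := hO1 (m)
      rw [show 4*(m)+2 = i by omega, show 4*(m)+6 = i + 4 by omega] at h
      exact h
    have o2 : c (i + 1) + c (i + 3) = 1 := by
      have h := hO0 (2*m + 1)
      rw [show 2*(2*m + 1)+1 = i + 1 by omega, show 2*(2*m + 1)+3 = i + 3 by omega] at h
      exact h
    omega
  · -- r = 2
    have b0 := hc (i - 1)
    have b1 := hc (i)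
    have b2 := hc (i + 1)
    have b3 := hc (i + 2)
    have b4 := hc (i + 3)
    have b5 := hc (i + 4)
    have g0 := hRc i (by omega)
    have g1 := hRc (i + 1) (by omega)
    rw [show i + 1 - 1 = i by omega] at g1
    have g2 := hRc (i + 2) (by omega)
    rw [show i + 2 - 1 = i + 1 by omega] at g2
    have g3 := hRc (i + 3) (by omega)
    rw [show i + 3 - 1 = i + 2 by omega] at g3
    have g4 := hRc (i + 4) (by omega)
    rw [show i + 4 - 1 = i + 3 by omega] at g4
    have q0 := pal 0 (by omega)
    rw [show i + 0 = i by omega] at q0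
    rw [show i + (5 - 1) - 0 = i + 4 by omega] at q0
    have q1 := pal 1 (by omega)
    rw [show i + (5 - 1) - 1 = i + 3 by omega] at q1
    have p0 : c (i - 1) + c (i + 3) = 1 := by
      have h := hO1 (m)
      rw [show 4*(m)+2 = i - 1 by omega, show 4*(m)+6 = i + 3 by omega] at h
      exact h
    have o1 : c (i) + c (i + 2) = 1 := by
      have h := hO0 (2*m + 1)
      rw [show 2*(2*m + 1)+1 = i by omega, show 2*(2*m + 1)+3 = i + 2 by omega] at h
      exact h
    have o2 : c (i + 2) + c (i + 4) = 1 := by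
      have h := hO0 (2*m + 2)
      rw [show 2*(2*m + 2)+1 = i + 2 by omega, show 2*(2*m + 2)+3 = i + 4 by omega] at h
      exact h
    omega
  · -- r = 3
    have b0 := hc (i - 1)
    have b1 := hc (i)
    have b2 := hc (i + 1)
    have b3 := hc (i + 2)
    have b4 := hc (i + 3)
    have b5 := hc (i + 4)
    have g0 := hRc i (by omega)
    have g1 := hRc (i + 1) (by omega)
    rw [show i + 1 - 1 = i by omega] at g1
    have g2 := hRc (i + 2) (by omega)
    rw [show i + 2 - 1 = i + 1 by omega] at g2
    have g3 := hRc (i + 3) (by omega)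
    rw [show i + 3 - 1 = i + 2 by omega] at g3
    have g4 := hRc (i + 4) (by omega)
    rw [show i + 4 - 1 = i + 3 by omega] at g4
    have q0 := pal 0 (by omega)
    rw [show i + 0 = i by omega] at q0
    rw [show i + (5 - 1) - 0 = i + 4 by omega] at q0
    have q1 := pal 1 (by omega)
    rw [show i + (5 - 1) - 1 = i + 3 by omega] at q1
    have o0 : c (i - 1) + c (i + 1) = 1 := by
      have h := hO0 (2*m + 1)
      rw [show 2*(2*m + 1)+1 = i - 1 by omega, show 2*(2*m + 1)+3 = i + 1 by omega] at h
      exact h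
    have o1 : c (i + 1) + c (i + 3) = 1 := by
      have h := hO0 (2*m + 2)
      rw [show 2*(2*m + 2)+1 = i + 1 by omega, show 2*(2*m + 2)+3 = i + 3 by omega] at h
      exact h
    omega

lemma case6 (c R : ℕ → ℕ)
    (hc : ∀ k, c k ≤ 1)
    (hO0 : ∀ j, c (2*j+1) + c (2*j+3) = 1)
    (hO1 : ∀ j, c (4*j+2) + c (4*j+6) = 1)
    (hRc : ∀ k, 1 ≤ k → R k + c k = 2 + c (k-1))
    (i : ℕ) (hi1 : 1 ≤ i)
    (pal : ∀ t < 6, R (i + t) = R (i + (6 - 1) - t)) :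
    False := by
  obtain ⟨m, r, hr4, hieq⟩ : ∃ m r, r < 4 ∧ i = 4*m + r + 1 :=
    ⟨(i-1)/4, (i-1)%4, Nat.mod_lt _ (by norm_num), by omega⟩
  have hr' : r = 0 ∨ r = 1 ∨ r = 2 ∨ r = 3 := by omega
  clear hr4
  rcases hr' with rfl | rfl | rfl | rfl
  · -- r = 0
    have b0 := hc (i - 1)
    have b1 := hc (i)
    have b2 := hc (i + 1)
    have b3 := hc (i + 2)
    have b4 := hc (i + 3)
    have b5 := hc (i + 4)
    have b6 := hc (i + 5)
    have g0 := hRc i (by omega)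
    have g1 := hRc (i + 1) (by omega)
    rw [show i + 1 - 1 = i by omega] at g1
    have g2 := hRc (i + 2) (by omega)
    rw [show i + 2 - 1 = i + 1 by omega] at g2
    have g3 := hRc (i + 3) (by omega)
    rw [show i + 3 - 1 = i + 2 by omega] at g3
    have g4 := hRc (i + 4) (by omega)
    rw [show i + 4 - 1 = i + 3 by omega] at g4
    have g5 := hRc (i + 5) (by omega)
    rw [show i + 5 - 1 = i + 4 by omega] at g5
    have q0 := pal 0 (by omega)
    rw [show i + 0 = i by omega] at q0
    rw [show i + (6 - 1) - 0 = i + 5 by omega] at q0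
    have q1 := pal 1 (by omega)
    rw [show i + (6 - 1) - 1 = i + 4 by omega] at q1
    have q2 := pal 2 (by omega)
    rw [show i + (6 - 1) - 2 = i + 3 by omega] at q2
    have o0 : c (i) + c (i + 2) = 1 := by
      have h := hO0 (2*m)
      rw [show 2*(2*m)+1 = i by omega, show 2*(2*m)+3 = i + 2 by omega] at h
      exact h
    have p1 : c (i + 1) + c (i + 5) = 1 := by
      have h := hO1 (m)
      rw [show 4*(m)+2 = i + 1 by omega, show 4*(m)+6 = i + 5 by omega] at h
      exact h
    have o2 : c (i + 2) + c (i + 4) = 1 := by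
      have h := hO0 (2*m + 1)
      rw [show 2*(2*m + 1)+1 = i + 2 by omega, show 2*(2*m + 1)+3 = i + 4 by omega] at h
      exact h
    omega
  · -- r = 1
    have b0 := hc (i - 1)
    have b1 := hc (i)
    have b2 := hc (i + 1)
    have b3 := hc (i + 2)
    have b4 := hc (i + 3)
    have b5 := hc (i + 4)
    have b6 := hc (i + 5)
    have g0 := hRc i (by omega)
    have g1 := hRc (i + 1) (by omega)
    rw [show i + 1 - 1 = i by omega] at g1
    have g2 := hRc (i + 2) (by omega)
    rw [show i + 2 - 1 = i + 1 by omega] at g2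
    have g3 := hRc (i + 3) (by omega)
    rw [show i + 3 - 1 = i + 2 by omega] at g3
    have g4 := hRc (i + 4) (by omega)
    rw [show i + 4 - 1 = i + 3 by omega] at g4
    have g5 := hRc (i + 5) (by omega)
    rw [show i + 5 - 1 = i + 4 by omega] at g5
    have q0 := pal 0 (by omega)
    rw [show i + 0 = i by omega] at q0
    rw [show i + (6 - 1) - 0 = i + 5 by omega] at q0
    have q1 := pal 1 (by omega)
    rw [show i + (6 - 1) - 1 = i + 4 by omega] at q1
    have q2 := pal 2 (by omega)
    rw [show i + (6 - 1) - 2 = i + 3 by omega] at q2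
    have o0 : c (i - 1) + c (i + 1) = 1 := by
      have h := hO0 (2*m)
      rw [show 2*(2*m)+1 = i - 1 by omega, show 2*(2*m)+3 = i + 1 by omega] at h
      exact h
    have p1 : c (i) + c (i + 4) = 1 := by
      have h := hO1 (m)
      rw [show 4*(m)+2 = i by omega, show 4*(m)+6 = i + 4 by omega] at h
      exact h
    have o2 : c (i + 1) + c (i + 3) = 1 := by
      have h := hO0 (2*m + 1)
      rw [show 2*(2*m + 1)+1 = i + 1 by omega, show 2*(2*m + 1)+3 = i + 3 by omega] at h
      exact h
    have o3 : c (i + 3) + c (i + 5) = 1 := by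
      have h := hO0 (2*m + 2)
      rw [show 2*(2*m + 2)+1 = i + 3 by omega, show 2*(2*m + 2)+3 = i + 5 by omega] at h
      exact h
    omega
  · -- r = 2
    have b0 := hc (i - 1)
    have b1 := hc (i)
    have b2 := hc (i + 1)
    have b3 := hc (i + 2)
    have b4 := hc (i + 3)
    have b5 := hc (i + 4)
    have b6 := hc (i + 5)
    have g0 := hRc i (by omega)
    have g1 := hRc (i + 1) (by omega)
    rw [show i + 1 - 1 = i by omega] at g1
    have g2 := hRc (i + 2) (by omega)
    rw [show i + 2 - 1 = i + 1 by omega] at g2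
    have g3 := hRc (i + 3) (by omega)
    rw [show i + 3 - 1 = i + 2 by omega] at g3
    have g4 := hRc (i + 4) (by omega)
    rw [show i + 4 - 1 = i + 3 by omega] at g4
    have g5 := hRc (i + 5) (by omega)
    rw [show i + 5 - 1 = i + 4 by omega] at g5
    have q0 := pal 0 (by omega)
    rw [show i + 0 = i by omega] at q0
    rw [show i + (6 - 1) - 0 = i + 5 by omega] at q0
    have q1 := pal 1 (by omega)
    rw [show i + (6 - 1) - 1 = i + 4 by omega] at q1
    have q2 := pal 2 (by omega)
    rw [show i + (6 - 1) - 2 = i + 3 by omega] at q2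
    have p0 : c (i - 1) + c (i + 3) = 1 := by
      have h := hO1 (m)
      rw [show 4*(m)+2 = i - 1 by omega, show 4*(m)+6 = i + 3 by omega] at h
      exact h
    have o1 : c (i) + c (i + 2) = 1 := by
      have h := hO0 (2*m + 1)
      rw [show 2*(2*m + 1)+1 = i by omega, show 2*(2*m + 1)+3 = i + 2 by omega] at h
      exact h
    have o2 : c (i + 2) + c (i + 4) = 1 := by
      have h := hO0 (2*m + 2)
      rw [show 2*(2*m + 2)+1 = i + 2 by omega, show 2*(2*m + 2)+3 = i + 4 by omega] at h
      exact h
    omega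
  · -- r = 3
    have b0 := hc (i - 1)
    have b1 := hc (i)
    have b2 := hc (i + 1)
    have b3 := hc (i + 2)
    have b4 := hc (i + 3)
    have b5 := hc (i + 4)
    have b6 := hc (i + 5)
    have g0 := hRc i (by omega)
    have g1 := hRc (i + 1) (by omega)
    rw [show i + 1 - 1 = i by omega] at g1
    have g2 := hRc (i + 2) (by omega)
    rw [show i + 2 - 1 = i + 1 by omega] at g2
    have g3 := hRc (i + 3) (by omega)
    rw [show i + 3 - 1 = i + 2 by omega] at g3
    have g4 := hRc (i + 4) (by omega)
    rw [show i + 4 - 1 = i + 3 by omega] at g4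
    have g5 := hRc (i + 5) (by omega)
    rw [show i + 5 - 1 = i + 4 by omega] at g5
    have q0 := pal 0 (by omega)
    rw [show i + 0 = i by omega] at q0
    rw [show i + (6 - 1) - 0 = i + 5 by omega] at q0
    have q1 := pal 1 (by omega)
    rw [show i + (6 - 1) - 1 = i + 4 by omega] at q1
    have q2 := pal 2 (by omega)
    rw [show i + (6 - 1) - 2 = i + 3 by omega] at q2
    have o0 : c (i - 1) + c (i + 1) = 1 := by
      have h := hO0 (2*m + 1)
      rw [show 2*(2*m + 1)+1 = i - 1 by omega, show 2*(2*m + 1)+3 = i + 1 by omega] at h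
      exact h
    have o1 : c (i + 1) + c (i + 3) = 1 := by
      have h := hO0 (2*m + 2)
      rw [show 2*(2*m + 2)+1 = i + 1 by omega, show 2*(2*m + 2)+3 = i + 3 by omega] at h
      exact h
    have o2 : c (i + 3) + c (i + 5) = 1 := by
      have h := hO0 (2*m + 3)
      rw [show 2*(2*m + 3)+1 = i + 3 by omega, show 2*(2*m + 3)+3 = i + 5 by omega] at h
      exact h
    omega

lemma case7 (c R : ℕ → ℕ)
    (hc : ∀ k, c k ≤ 1)
    (hO0 : ∀ j, c (2*j+1) + c (2*j+3) = 1)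
    (hO1 : ∀ j, c (4*j+2) + c (4*j+6) = 1)
    (hRc : ∀ k, 1 ≤ k → R k + c k = 2 + c (k-1))
    (i : ℕ) (hi1 : 1 ≤ i)
    (pal : ∀ t < 7, R (i + t) = R (i + (7 - 1) - t)) :
    False := by
  obtain ⟨m, r, hr4, hieq⟩ : ∃ m r, r < 4 ∧ i = 4*m + r + 1 :=
    ⟨(i-1)/4, (i-1)%4, Nat.mod_lt _ (by norm_num), by omega⟩
  have hr' : r = 0 ∨ r = 1 ∨ r = 2 ∨ r = 3 := by omega
  clear hr4
  rcases hr' with rfl | rfl | rfl | rfl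
  · -- r = 0
    have b0 := hc (i - 1)
    have b1 := hc (i)
    have b2 := hc (i + 1)
    have b3 := hc (i + 2)
    have b4 := hc (i + 3)
    have b5 := hc (i + 4)
    have b6 := hc (i + 5)
    have b7 := hc (i + 6)
    have g0 := hRc i (by omega)
    have g1 := hRc (i + 1) (by omega)
    rw [show i + 1 - 1 = i by omega] at g1
    have g2 := hRc (i + 2) (by omega)
    rw [show i + 2 - 1 = i + 1 by omega] at g2
    have g3 := hRc (i + 3) (by omega)
    rw [show i + 3 - 1 = i + 2 by omega] at g3
    have g4 := hRc (i + 4) (by omega)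
    rw [show i + 4 - 1 = i + 3 by omega] at g4
    have g5 := hRc (i + 5) (by omega)
    rw [show i + 5 - 1 = i + 4 by omega] at g5
    have g6 := hRc (i + 6) (by omega)
    rw [show i + 6 - 1 = i + 5 by omega] at g6
    have q0 := pal 0 (by omega)
    rw [show i + 0 = i by omega] at q0
    rw [show i + (7 - 1) - 0 = i + 6 by omega] at q0
    have q1 := pal 1 (by omega)
    rw [show i + (7 - 1) - 1 = i + 5 by omega] at q1
    have q2 := pal 2 (by omega)
    rw [show i + (7 - 1) - 2 = i + 4 by omega] at q2
    have o0 : c (i) + c (i + 2) = 1 := by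
      have h := hO0 (2*m)
      rw [show 2*(2*m)+1 = i by omega, show 2*(2*m)+3 = i + 2 by omega] at h
      exact h
    have p1 : c (i + 1) + c (i + 5) = 1 := by
      have h := hO1 (m)
      rw [show 4*(m)+2 = i + 1 by omega, show 4*(m)+6 = i + 5 by omega] at h
      exact h
    have o2 : c (i + 2) + c (i + 4) = 1 := by
      have h := hO0 (2*m + 1)
      rw [show 2*(2*m + 1)+1 = i + 2 by omega, show 2*(2*m + 1)+3 = i + 4 by omega] at h
      exact h
    have o3 : c (i + 4) + c (i + 6) = 1 := by
      have h := hO0 (2*m + 2)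
      rw [show 2*(2*m + 2)+1 = i + 4 by omega, show 2*(2*m + 2)+3 = i + 6 by omega] at h
      exact h
    omega
  · -- r = 1
    have b0 := hc (i - 1)
    have b1 := hc (i)
    have b2 := hc (i + 1)
    have b3 := hc (i + 2)
    have b4 := hc (i + 3)
    have b5 := hc (i + 4)
    have b6 := hc (i + 5)
    have b7 := hc (i + 6)
    have g0 := hRc i (by omega)
    have g1 := hRc (i + 1) (by omega)
    rw [show i + 1 - 1 = i by omega] at g1
    have g2 := hRc (i + 2) (by omega)
    rw [show i + 2 - 1 = i + 1 by omega] at g2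
    have g3 := hRc (i + 3) (by omega)
    rw [show i + 3 - 1 = i + 2 by omega] at g3
    have g4 := hRc (i + 4) (by omega)
    rw [show i + 4 - 1 = i + 3 by omega] at g4
    have g5 := hRc (i + 5) (by omega)
    rw [show i + 5 - 1 = i + 4 by omega] at g5
    have g6 := hRc (i + 6) (by omega)
    rw [show i + 6 - 1 = i + 5 by omega] at g6
    have q0 := pal 0 (by omega)
    rw [show i + 0 = i by omega] at q0
    rw [show i + (7 - 1) - 0 = i + 6 by omega] at q0
    have q1 := pal 1 (by omega)
    rw [show i + (7 - 1) - 1 = i + 5 by omega] at q1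
    have q2 := pal 2 (by omega)
    rw [show i + (7 - 1) - 2 = i + 4 by omega] at q2
    have o0 : c (i - 1) + c (i + 1) = 1 := by
      have h := hO0 (2*m)
      rw [show 2*(2*m)+1 = i - 1 by omega, show 2*(2*m)+3 = i + 1 by omega] at h
      exact h
    have p1 : c (i) + c (i + 4) = 1 := by
      have h := hO1 (m)
      rw [show 4*(m)+2 = i by omega, show 4*(m)+6 = i + 4 by omega] at h
      exact h
    have o2 : c (i + 1) + c (i + 3) = 1 := by
      have h := hO0 (2*m + 1)
      rw [show 2*(2*m + 1)+1 = i + 1 by omega, show 2*(2*m + 1)+3 = i + 3 by omega] at h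
      exact h
    have o3 : c (i + 3) + c (i + 5) = 1 := by
      have h := hO0 (2*m + 2)
      rw [show 2*(2*m + 2)+1 = i + 3 by omega, show 2*(2*m + 2)+3 = i + 5 by omega] at h
      exact h
    omega
  · -- r = 2
    have b0 := hc (i - 1)
    have b1 := hc (i)
    have b2 := hc (i + 1)
    have b3 := hc (i + 2)
    have b4 := hc (i + 3)
    have b5 := hc (i + 4)
    have b6 := hc (i + 5)
    have b7 := hc (i + 6)
    have g0 := hRc i (by omega)
    have g1 := hRc (i + 1) (by omega)
    rw [show i + 1 - 1 = i by omega] at g1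
    have g2 := hRc (i + 2) (by omega)
    rw [show i + 2 - 1 = i + 1 by omega] at g2
    have g3 := hRc (i + 3) (by omega)
    rw [show i + 3 - 1 = i + 2 by omega] at g3
    have g4 := hRc (i + 4) (by omega)
    rw [show i + 4 - 1 = i + 3 by omega] at g4
    have g5 := hRc (i + 5) (by omega)
    rw [show i + 5 - 1 = i + 4 by omega] at g5
    have g6 := hRc (i + 6) (by omega)
    rw [show i + 6 - 1 = i + 5 by omega] at g6
    have q0 := pal 0 (by omega)
    rw [show i + 0 = i by omega] at q0
    rw [show i + (7 - 1) - 0 = i + 6 by omega] at q0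
    have q1 := pal 1 (by omega)
    rw [show i + (7 - 1) - 1 = i + 5 by omega] at q1
    have q2 := pal 2 (by omega)
    rw [show i + (7 - 1) - 2 = i + 4 by omega] at q2
    have p0 : c (i - 1) + c (i + 3) = 1 := by
      have h := hO1 (m)
      rw [show 4*(m)+2 = i - 1 by omega, show 4*(m)+6 = i + 3 by omega] at h
      exact h
    have o1 : c (i) + c (i + 2) = 1 := by
      have h := hO0 (2*m + 1)
      rw [show 2*(2*m + 1)+1 = i by omega, show 2*(2*m + 1)+3 = i + 2 by omega] at h
      exact h
    have o2 : c (i + 2) + c (i + 4) = 1 := by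
      have h := hO0 (2*m + 2)
      rw [show 2*(2*m + 2)+1 = i + 2 by omega, show 2*(2*m + 2)+3 = i + 4 by omega] at h
      exact h
    have o3 : c (i + 4) + c (i + 6) = 1 := by
      have h := hO0 (2*m + 3)
      rw [show 2*(2*m + 3)+1 = i + 4 by omega, show 2*(2*m + 3)+3 = i + 6 by omega] at h
      exact h
    omega
  · -- r = 3
    have b0 := hc (i - 1)
    have b1 := hc (i)
    have b2 := hc (i + 1)
    have b3 := hc (i + 2)
    have b4 := hc (i + 3)
    have b5 := hc (i + 4)
    have b6 := hc (i + 5)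
    have b7 := hc (i + 6)
    have g0 := hRc i (by omega)
    have g1 := hRc (i + 1) (by omega)
    rw [show i + 1 - 1 = i by omega] at g1
    have g2 := hRc (i + 2) (by omega)
    rw [show i + 2 - 1 = i + 1 by omega] at g2
    have g3 := hRc (i + 3) (by omega)
    rw [show i + 3 - 1 = i + 2 by omega] at g3
    have g4 := hRc (i + 4) (by omega)
    rw [show i + 4 - 1 = i + 3 by omega] at g4
    have g5 := hRc (i + 5) (by omega)
    rw [show i + 5 - 1 = i + 4 by omega] at g5
    have g6 := hRc (i + 6) (by omega)
    rw [show i + 6 - 1 = i + 5 by omega] at g6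
    have q0 := pal 0 (by omega)
    rw [show i + 0 = i by omega] at q0
    rw [show i + (7 - 1) - 0 = i + 6 by omega] at q0
    have q1 := pal 1 (by omega)
    rw [show i + (7 - 1) - 1 = i + 5 by omega] at q1
    have q2 := pal 2 (by omega)
    rw [show i + (7 - 1) - 2 = i + 4 by omega] at q2
    have o0 : c (i - 1) + c (i + 1) = 1 := by
      have h := hO0 (2*m + 1)
      rw [show 2*(2*m + 1)+1 = i - 1 by omega, show 2*(2*m + 1)+3 = i + 1 by omega] at h
      exact h
    have o1 : c (i + 1) + c (i + 3) = 1 := by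
      have h := hO0 (2*m + 2)
      rw [show 2*(2*m + 2)+1 = i + 1 by omega, show 2*(2*m + 2)+3 = i + 3 by omega] at h
      exact h
    have p2 : c (i + 2) + c (i + 6) = 1 := by
      have h := hO1 (m + 1)
      rw [show 4*(m + 1)+2 = i + 2 by omega, show 4*(m + 1)+6 = i + 6 by omega] at h
      exact h
    have o3 : c (i + 3) + c (i + 5) = 1 := by
      have h := hO0 (2*m + 3)
      rw [show 2*(2*m + 3)+1 = i + 3 by omega, show 2*(2*m + 3)+3 = i + 5 by omega] at h
      exact h
    omega

lemma core (c R : ℕ → ℕ)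
    (hc : ∀ k, c k ≤ 1)
    (hO0 : ∀ j, c (2*j+1) + c (2*j+3) = 1)
    (hO1 : ∀ j, c (4*j+2) + c (4*j+6) = 1)
    (hRc : ∀ k, 1 ≤ k → R k + c k = 2 + c (k-1)) :
    ∀ i n : ℕ, 1 ≤ i → 1 ≤ n → (∀ t < n, R (i + t) = R (i + (n - 1) - t)) →
      (n = 1 ∧ (R i = 1 ∨ R i = 2 ∨ R i = 3)) ∨
      (n = 2 ∧ R i = 2 ∧ R (i + 1) = 2) ∨
      (n = 3 ∧ ((R i = 2 ∧ R (i + 1) = 1 ∧ R (i + 2) = 2) ∨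
                (R i = 2 ∧ R (i + 1) = 3 ∧ R (i + 2) = 2))) ∨
      (n = 5 ∧ ((R i = 1 ∧ R (i + 1) = 2 ∧ R (i + 2) = 3 ∧ R (i + 3) = 2 ∧ R (i + 4) = 1) ∨
                (R i = 3 ∧ R (i + 1) = 2 ∧ R (i + 2) = 1 ∧ R (i + 3) = 2 ∧ R (i + 4) = 3))) := by
  intro i n
  induction n using Nat.strong_induction_on generalizing i with
  | _ n IH =>
    intro hi1 hn1 pal
    by_cases h8 : n ≤ 7
    · have hn7 : n = 1 ∨ n = 2 ∨ n = 3 ∨ n = 4 ∨ n = 5 ∨ n = 6 ∨ n = 7 := by omega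
      rcases hn7 with rfl | rfl | rfl | rfl | rfl | rfl | rfl
      · refine Or.inl ⟨rfl, ?_⟩
        have g0 := hRc i (by omega)
        have b0 := hc (i - 1)
        have b1 := hc i
        omega
      · exact Or.inr (Or.inl ⟨rfl, case2 c R hc hO0 hO1 hRc i hi1 pal⟩)
      · exact Or.inr (Or.inr (Or.inl ⟨rfl, case3 c R hc hO0 hO1 hRc i hi1 pal⟩))
      · exact absurd pal (by intro pal'; exact case4 c R hc hO0 hO1 hRc i hi1 pal')
      · exact Or.inr (Or.inr (Or.inr ⟨rfl, case5 c R hc hO0 hO1 hRc i hi1 pal⟩))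
      · exact absurd pal (by intro pal'; exact case6 c R hc hO0 hO1 hRc i hi1 pal')
      · exact absurd pal (by intro pal'; exact case7 c R hc hO0 hO1 hRc i hi1 pal')
    · exfalso
      have pal' : ∀ t < n - 2, R ((i+1) + t) = R ((i+1) + (n - 2 - 1) - t) := by
        intro t ht
        have h := pal (t+1) (by omega)
        rw [show i + (t+1) = i+1+t by omega,
          show i + (n - 1) - (t+1) = i+1 + (n - 2 - 1) - t by omega] at h
        exact h
      have := IH (n-2) (by omega) (i+1) (by omega) (by omega) pal'
      omega


theorem runSeq_palindromes (f p : ℕ → ℤ) (E : ℕ → ℕ)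
    (hf : ∀ n, f n = -1 ∨ f n = 1) (hp : IsLimit f p) (hE : IsRunEnds p E)
    (R : ℕ → ℕ) (hR : ∀ k, R k = E k - E (k - 1)) :
    ∀ i n : ℕ, 1 ≤ i → 1 ≤ n → (∀ t < n, R (i + t) = R (i + (n - 1) - t)) →
      (n = 1 ∧ (R i = 1 ∨ R i = 2 ∨ R i = 3)) ∨
      (n = 2 ∧ R i = 2 ∧ R (i + 1) = 2) ∨
      (n = 3 ∧ ((R i = 2 ∧ R (i + 1) = 1 ∧ R (i + 2) = 2) ∨
                (R i = 2 ∧ R (i + 1) = 3 ∧ R (i + 2) = 2))) ∨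
      (n = 5 ∧ ((R i = 1 ∧ R (i + 1) = 2 ∧ R (i + 2) = 3 ∧ R (i + 3) = 2 ∧ R (i + 4) = 1) ∨
                (R i = 3 ∧ R (i + 1) = 2 ∧ R (i + 2) = 1 ∧ R (i + 3) = 2 ∧ R (i + 4) = 3))) := by
  have hc : ∀ k, cfun p k ≤ 1 := cfun_le p
  have hO0 := cfun_O0 hf hp
  have hO1 := cfun_O1 hf hp
  have hEe := E_eq hf hp hE
  have hRc : ∀ k, 1 ≤ k → R k + cfun p k = 2 + cfun p (k-1) := by
    intro k hk
    obtain ⟨u, rfl⟩ : ∃ u, k = u + 1 := ⟨k-1, by omega⟩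
    have h1 := hR (u+1)
    have h2 := hEe (u+1)
    have h3 := hEe u
    have h4 := hc (u+1)
    have h5 := hc u
    rcases Nat.eq_zero_or_pos u with rfl | hu
    · have h6 : cfun p 0 = 0 := rfl
      rw [show (0:ℕ)+1-1 = 0 by omega] at h1 ⊢
      omega
    · rw [show u+1-1 = u by omega] at h1 ⊢
      omega
  exact core (cfun p) R hc hO0 hO1 hRc
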